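/- With notation as above (c = {y, y+1/3} a critical chord, L(c) the complementary open arc of length 2/3, Π(c) the set of points whose forward σ₃-orbit stays in the closure of L(c)): every point x ∈ Π(c) with x ≠ σ₃(y) has exactly two σ₃-preimages in Π(c), and if σ₃(y) ∈ Π(c) then σ₃(y) has exactly three σ₃-preimages in Π(c). -/

import Mathlib

private lemma ceq {a b : ℝ} : ((a : AddCircle (1:ℝ)) = ↑b) ↔ ∃ m : ℤ, a - b = m := by
  rw [QuotientAddGroup.eq_iff_sub_mem]
  simp [AddSubgroup.mem_zmultiples_iff, eq_comm]

private lemma smul3 (s : ℝ) : (3:ℤ) • (↑s : AddCircle (1:ℝ)) = ↑(3*s) := by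
  rw [show (3*s : ℝ) = (3:ℤ) • s by rw [zsmul_eq_mul]; push_cast; ring]; rfl

private lemma memK (y s : ℝ) :
    (↑s ∈ (fun t : ℝ => (t : AddCircle (1:ℝ))) '' Set.Icc (y + 1/3) (y + 1)) ↔
      Int.fract (s - (y + 1/3)) ≤ 2/3 := by
  constructor
  · rintro ⟨u, hu, hus⟩
    obtain ⟨m, hm⟩ := ceq.1 hus
    have : s - (y + 1/3) = (u - (y + 1/3)) + (-m : ℤ) := by push_cast; linarith
    rw [this, Int.fract_add_intCast, Int.fract_eq_self.2 ⟨by linarith [hu.1], by linarith [hu.2]⟩]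
    linarith [hu.2]
  · intro h
    refine ⟨y + 1/3 + Int.fract (s - (y + 1/3)), ⟨by linarith [Int.fract_nonneg (s - (y+1/3))], by linarith⟩, ?_⟩
    rw [ceq]
    exact ⟨-⌊s - (y + 1/3)⌋, by push_cast; linarith [Int.fract_add_floor (s - (y+1/3))]⟩

private lemma pre3 (t : ℝ) :
    {z : AddCircle (1:ℝ) | (3:ℤ) • z = ↑t} =
      {(↑(t/3) : AddCircle (1:ℝ)), ↑(t/3 + 1/3), ↑(t/3 + 2/3)} := by
  ext z
  obtain ⟨s, rfl⟩ := QuotientAddGroup.mk_surjective z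
  simp only [Set.mem_setOf_eq, Set.mem_insert_iff, Set.mem_singleton_iff, smul3, ceq]
  constructor
  · rintro ⟨m, hm⟩
    have h3 : (3:ℤ) ∣ (m - (m % 3)) := Int.dvd_self_sub_of_emod_eq rfl
    obtain ⟨q, hq⟩ := h3
    have hr : m % 3 = 0 ∨ m % 3 = 1 ∨ m % 3 = 2 := by omega
    have key : ∀ r : ℤ, m % 3 = r → s - (t/3 + r/3) = (q:ℝ) := by
      intro r hrr
      have : (m:ℝ) = r + 3*q := by
        have : m = r + 3*q := by omega
        exact_mod_cast this
      rw [this] at hm; linarith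
    rcases hr with h | h | h
    · exact Or.inl ⟨q, by have := key 0 h; push_cast at this ⊢; linarith⟩
    · exact Or.inr (Or.inl ⟨q, by have := key 1 h; push_cast at this ⊢; linarith⟩)
    · exact Or.inr (Or.inr ⟨q, by have := key 2 h; push_cast at this ⊢; linarith⟩)
  · rintro (⟨m, hm⟩ | ⟨m, hm⟩ | ⟨m, hm⟩)
    · exact ⟨3*m, by push_cast; linarith⟩
    · exact ⟨3*m + 1, by push_cast; linarith⟩
    · exact ⟨3*m + 2, by push_cast; linarith⟩

private lemma ne13 {a b : ℝ} (h : b - a = 1/3 ∨ b - a = 2/3) :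
    (↑a : AddCircle (1:ℝ)) ≠ ↑b := by
  intro hab
  obtain ⟨m, hm⟩ := ceq.1 hab
  rcases h with h | h
  · have : (3*m : ℤ) = -1 := by exact_mod_cast (by push_cast; linarith : ((3*m : ℤ) : ℝ) = -1)
    omega
  · have : (3*m : ℤ) = -2 := by exact_mod_cast (by push_cast; linarith : ((3*m : ℤ) : ℝ) = -2)
    omega

private lemma fract_shift (d c : ℝ) : Int.fract (d + c) = Int.fract (Int.fract d + c) := by
  conv_lhs => rw [← Int.fract_add_floor d]
  rw [show Int.fract d + ↑⌊d⌋ + c = Int.fract d + c + ↑⌊d⌋ by ring, Int.fract_add_intCast]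

/-- In K iff fract of shifted preimage ≤ 2/3, reformulated via fract of d. -/
private lemma memK' (y t : ℝ) (k : ℝ) :
    ((↑(t/3 + k) : AddCircle (1:ℝ)) ∈
        (fun t : ℝ => (t : AddCircle (1:ℝ))) '' Set.Icc (y + 1/3) (y + 1)) ↔
      Int.fract (Int.fract (t/3 - (y + 1/3)) + k) ≤ 2/3 := by
  rw [memK, show t/3 + k - (y + 1/3) = (t/3 - (y + 1/3)) + k by ring, fract_shift]

private lemma count2 (y t : ℝ) (hne : (↑t : AddCircle (1:ℝ)) ≠ ↑(3*y)) :
    Set.ncard {z : AddCircle (1:ℝ) |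
        z ∈ (fun t : ℝ => (t : AddCircle (1:ℝ))) '' Set.Icc (y + 1/3) (y + 1) ∧
        (3:ℤ) • z = ↑t} = 2 := by
  set K : Set (AddCircle (1:ℝ)) :=
    (fun t : ℝ => (t : AddCircle (1:ℝ))) '' Set.Icc (y + 1/3) (y + 1) with hK
  set f : ℝ := Int.fract (t/3 - (y + 1/3)) with hf
  have hf0 : 0 ≤ f := Int.fract_nonneg _
  have hf1 : f < 1 := Int.fract_lt_one _
  -- f ∉ {0, 1/3, 2/3}
  have hfk : ∀ k : ℤ, f ≠ (k:ℝ)/3 := by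
    intro k hk
    apply hne
    rw [ceq]
    have : t/3 - (y + 1/3) - (k:ℝ)/3 = (⌊t/3 - (y + 1/3)⌋ : ℝ) := by
      have := Int.fract_add_floor (t/3 - (y + 1/3))
      rw [← hf] at this; linarith [hk ▸ this]
    exact ⟨1 + k + 3*⌊t/3 - (y + 1/3)⌋, by push_cast; linarith⟩
  have hne0 : f ≠ 0 := by simpa using hfk 0
  have hne13 : f ≠ 1/3 := by have := hfk 1; simpa using this
  have hne23 : f ≠ 2/3 := by have := hfk 2; simpa using this
  -- three candidate preimages
  have e0 : (3:ℤ) • (↑(t/3) : AddCircle (1:ℝ)) = ↑t := by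
    rw [smul3]; congr 1; ring
  have e1 : (3:ℤ) • (↑(t/3 + 1/3) : AddCircle (1:ℝ)) = ↑t := by
    rw [smul3, ceq]; exact ⟨1, by push_cast; ring⟩
  have e2 : (3:ℤ) • (↑(t/3 + 2/3) : AddCircle (1:ℝ)) = ↑t := by
    rw [smul3, ceq]; exact ⟨2, by push_cast; ring⟩
  have m0 : ((↑(t/3) : AddCircle (1:ℝ)) ∈ K) ↔ f ≤ 2/3 := by
    have := memK' y t 0; rw [add_zero] at this
    rw [hK, this, add_zero, Int.fract_fract, ← hf]
  have m1 : ((↑(t/3 + 1/3) : AddCircle (1:ℝ)) ∈ K) ↔ Int.fract (f + 1/3) ≤ 2/3 := by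
    rw [hK, memK' y t (1/3), ← hf]
  have m2 : ((↑(t/3 + 2/3) : AddCircle (1:ℝ)) ∈ K) ↔ Int.fract (f + 2/3) ≤ 2/3 := by
    rw [hK, memK' y t (2/3), ← hf]
  have hsplit : ∀ z : AddCircle (1:ℝ), (3:ℤ) • z = ↑t ↔
      z = ↑(t/3) ∨ z = ↑(t/3 + 1/3) ∨ z = ↑(t/3 + 2/3) := by
    intro z
    have := Set.ext_iff.1 (pre3 t) z
    simpa using this
  rcases lt_trichotomy f (1/3) with h13 | h13 | h13
  · -- f ∈ (0, 1/3): preimages t/3 and t/3+1/3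
    have hf0' : 0 < f := lt_of_le_of_ne hf0 (Ne.symm hne0)
    have c0 : ((↑(t/3) : AddCircle (1:ℝ)) ∈ K) := m0.2 (by linarith)
    have c1 : ((↑(t/3 + 1/3) : AddCircle (1:ℝ)) ∈ K) := m1.2 (by
      rw [Int.fract_eq_self.2 ⟨by linarith, by linarith⟩]; linarith)
    have c2 : ¬ ((↑(t/3 + 2/3) : AddCircle (1:ℝ)) ∈ K) := fun h => by
      have := m2.1 h
      rw [Int.fract_eq_self.2 ⟨by linarith, by linarith⟩] at this; linarith
    have : {z : AddCircle (1:ℝ) | z ∈ K ∧ (3:ℤ) • z = ↑t} =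
        {(↑(t/3) : AddCircle (1:ℝ)), ↑(t/3 + 1/3)} := by
      ext z
      simp only [Set.mem_setOf_eq, hsplit, Set.mem_insert_iff, Set.mem_singleton_iff]
      constructor
      · rintro ⟨hzK, rfl | rfl | rfl⟩
        · exact Or.inl rfl
        · exact Or.inr rfl
        · exact absurd hzK c2
      · rintro (rfl | rfl)
        · exact ⟨c0, Or.inl rfl⟩
        · exact ⟨c1, Or.inr (Or.inl rfl)⟩
    rw [this, Set.ncard_pair (ne13 (Or.inl (by ring)))]
  · exact absurd h13 hne13
  · rcases lt_trichotomy f (2/3) with h23 | h23 | h23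
    · -- f ∈ (1/3, 2/3): preimages t/3 and t/3+2/3
      have c0 : ((↑(t/3) : AddCircle (1:ℝ)) ∈ K) := m0.2 (by linarith)
      have c1 : ¬ ((↑(t/3 + 1/3) : AddCircle (1:ℝ)) ∈ K) := fun h => by
        have := m1.1 h
        rw [Int.fract_eq_self.2 ⟨by linarith, by linarith⟩] at this; linarith
      have c2 : ((↑(t/3 + 2/3) : AddCircle (1:ℝ)) ∈ K) := m2.2 (by
        rw [show f + 2/3 = (f - 1/3) + 1 by ring,
          show ((1:ℝ)) = ((1:ℤ):ℝ) by norm_num, Int.fract_add_intCast,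
          Int.fract_eq_self.2 ⟨by linarith, by linarith⟩]; linarith)
      have : {z : AddCircle (1:ℝ) | z ∈ K ∧ (3:ℤ) • z = ↑t} =
          {(↑(t/3) : AddCircle (1:ℝ)), ↑(t/3 + 2/3)} := by
        ext z
        simp only [Set.mem_setOf_eq, hsplit, Set.mem_insert_iff, Set.mem_singleton_iff]
        constructor
        · rintro ⟨hzK, rfl | rfl | rfl⟩
          · exact Or.inl rfl
          · exact absurd hzK c1
          · exact Or.inr rfl
        · rintro (rfl | rfl)
          · exact ⟨c0, Or.inl rfl⟩
          · exact ⟨c2, Or.inr (Or.inr rfl)⟩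
      rw [this, Set.ncard_pair (ne13 (Or.inr (by ring)))]
    · exact absurd h23 hne23
    · -- f ∈ (2/3, 1): preimages t/3+1/3 and t/3+2/3
      have c0 : ¬ ((↑(t/3) : AddCircle (1:ℝ)) ∈ K) := fun h => by
        have := m0.1 h; linarith
      have c1 : ((↑(t/3 + 1/3) : AddCircle (1:ℝ)) ∈ K) := m1.2 (by
        rw [show f + 1/3 = (f - 2/3) + 1 by ring,
          show ((1:ℝ)) = ((1:ℤ):ℝ) by norm_num, Int.fract_add_intCast,
          Int.fract_eq_self.2 ⟨by linarith, by linarith⟩]; linarith)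
      have c2 : ((↑(t/3 + 2/3) : AddCircle (1:ℝ)) ∈ K) := m2.2 (by
        rw [show f + 2/3 = (f - 1/3) + 1 by ring,
          show ((1:ℝ)) = ((1:ℤ):ℝ) by norm_num, Int.fract_add_intCast,
          Int.fract_eq_self.2 ⟨by linarith, by linarith⟩]; linarith)
      have : {z : AddCircle (1:ℝ) | z ∈ K ∧ (3:ℤ) • z = ↑t} =
          {(↑(t/3 + 1/3) : AddCircle (1:ℝ)), ↑(t/3 + 2/3)} := by
        ext z
        simp only [Set.mem_setOf_eq, hsplit, Set.mem_insert_iff, Set.mem_singleton_iff]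
        constructor
        · rintro ⟨hzK, rfl | rfl | rfl⟩
          · exact absurd hzK c0
          · exact Or.inl rfl
          · exact Or.inr rfl
        · rintro (rfl | rfl)
          · exact ⟨c1, Or.inr (Or.inl rfl)⟩
          · exact ⟨c2, Or.inr (Or.inr rfl)⟩
      rw [this, Set.ncard_pair (ne13 (Or.inl (by ring)))]

private lemma count3 (y : ℝ) :
    Set.ncard {z : AddCircle (1:ℝ) |
        z ∈ (fun t : ℝ => (t : AddCircle (1:ℝ))) '' Set.Icc (y + 1/3) (y + 1) ∧
        (3:ℤ) • z = ↑(3*y)} = 3 := by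
  set K : Set (AddCircle (1:ℝ)) :=
    (fun t : ℝ => (t : AddCircle (1:ℝ))) '' Set.Icc (y + 1/3) (y + 1) with hK
  set t : ℝ := 3*y with ht
  have hd : t/3 - (y + 1/3) = -1/3 := by rw [ht]; ring
  have hfr : Int.fract (t/3 - (y + 1/3)) = 2/3 := by
    rw [hd, show (-1/3 : ℝ) = 2/3 + (-1 : ℤ) by push_cast; ring, Int.fract_add_intCast,
      Int.fract_eq_self.2 ⟨by norm_num, by norm_num⟩]
  have c0 : ((↑(t/3) : AddCircle (1:ℝ)) ∈ K) := by
    rw [hK, show (t/3 : ℝ) = t/3 + 0 by ring, memK' y t 0, hfr, add_zero,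
      Int.fract_eq_self.2 ⟨by norm_num, by norm_num⟩]
  have c1 : ((↑(t/3 + 1/3) : AddCircle (1:ℝ)) ∈ K) := by
    rw [hK, memK' y t (1/3), hfr, show (2/3 + 1/3 : ℝ) = 0 + (1:ℤ) by push_cast; ring,
      Int.fract_add_intCast, Int.fract_zero]
    norm_num
  have c2 : ((↑(t/3 + 2/3) : AddCircle (1:ℝ)) ∈ K) := by
    rw [hK, memK' y t (2/3), hfr, show (2/3 + 2/3 : ℝ) = 1/3 + (1:ℤ) by push_cast; ring,
      Int.fract_add_intCast, Int.fract_eq_self.2 ⟨by norm_num, by norm_num⟩]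
    norm_num
  have hsplit : ∀ z : AddCircle (1:ℝ), (3:ℤ) • z = ↑t ↔
      z = ↑(t/3) ∨ z = ↑(t/3 + 1/3) ∨ z = ↑(t/3 + 2/3) := by
    intro z
    have := Set.ext_iff.1 (pre3 t) z
    simpa using this
  have hSet : {z : AddCircle (1:ℝ) | z ∈ K ∧ (3:ℤ) • z = ↑t} =
      {(↑(t/3) : AddCircle (1:ℝ)), ↑(t/3 + 1/3), ↑(t/3 + 2/3)} := by
    ext z
    simp only [Set.mem_setOf_eq, hsplit, Set.mem_insert_iff, Set.mem_singleton_iff]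
    constructor
    · rintro ⟨hzK, h⟩; exact h
    · rintro (rfl | rfl | rfl)
      · exact ⟨c0, Or.inl rfl⟩
      · exact ⟨c1, Or.inr (Or.inl rfl)⟩
      · exact ⟨c2, Or.inr (Or.inr rfl)⟩
  rw [hSet]
  rw [Set.ncard_insert_of_notMem, Set.ncard_pair (ne13 (Or.inl (by ring)))]
  · simp only [Set.mem_insert_iff, Set.mem_singleton_iff]
    push_neg
    exact ⟨ne13 (Or.inl (by ring)), ne13 (Or.inr (by ring))⟩




/-- Preimage counts in Π(c): every x ∈ Π(c) with x ≠ σ₃(y) has exactly two σ₃-preimages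
in Π(c); if σ₃(y) ∈ Π(c) then σ₃(y) has exactly three σ₃-preimages in Π(c). -/
theorem stmt9 (y : ℝ) :
    let σ : AddCircle (1:ℝ) → AddCircle (1:ℝ) := fun x => (3:ℤ) • x
    let K : Set (AddCircle (1:ℝ)) :=
      (fun t : ℝ => (t : AddCircle (1:ℝ))) '' Set.Icc (y + 1/3) (y + 1)
    let P : Set (AddCircle (1:ℝ)) := {x | ∀ n : ℕ, σ^[n] x ∈ K}
    (∀ x ∈ P, x ≠ σ ((y : ℝ) : AddCircle (1:ℝ)) →
      Set.ncard {z | z ∈ P ∧ σ z = x} = 2) ∧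
    (σ ((y : ℝ) : AddCircle (1:ℝ)) ∈ P →
      Set.ncard {z | z ∈ P ∧ σ z = σ ((y : ℝ) : AddCircle (1:ℝ))} = 3) := by
  intro σ K P
  have hPK : ∀ z : AddCircle (1:ℝ), z ∈ P ↔ z ∈ K ∧ σ z ∈ P := by
    intro z
    constructor
    · intro h
      refine ⟨h 0, fun n => ?_⟩
      have := h (n+1)
      rwa [Function.iterate_succ_apply] at this
    · rintro ⟨h0, h1⟩ n
      cases n with
      | zero => exact h0
      | succ n => rw [Function.iterate_succ_apply]; exact h1 n
  have hset : ∀ x : AddCircle (1:ℝ), x ∈ P →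
      {z | z ∈ P ∧ σ z = x} = {z | z ∈ K ∧ (3:ℤ) • z = x} := by
    intro x hx
    ext z
    simp only [Set.mem_setOf_eq]
    constructor
    · rintro ⟨hzP, hz3⟩
      exact ⟨((hPK z).1 hzP).1, hz3⟩
    · rintro ⟨hzK, hz3⟩
      exact ⟨(hPK z).2 ⟨hzK, by rw [show σ z = (3:ℤ) • z from rfl, hz3]; exact hx⟩, hz3⟩
  have hσy : σ ((y : ℝ) : AddCircle (1:ℝ)) = ↑(3*y) := smul3 y
  constructor
  · intro x hx hne
    obtain ⟨t, rfl⟩ := QuotientAddGroup.mk_surjective x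
    rw [hset _ hx]
    exact count2 y t (by rw [hσy] at hne; exact hne)
  · intro hx
    rw [hσy] at hx ⊢
    rw [hset _ hx]
    exact count3 y
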